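/- Let X and Y be d×d complex matrices and let n ∈ ℕ. Then (X+Y)^n / n! = lim_{m→∞} Σ_{α∈ℕ^{2m}, |α|=n} (1/(m^n · α!)) · X^{α₁} Y^{α₂} X^{α₃} Y^{α₄} ⋯ X^{α_{2m−1}} Y^{α_{2m}}, where the product of matrix powers is taken in the indicated order and the limit is in any (equivalently every) norm on the space of d×d complex matrices. -/

import Mathlib

open Filter Finset

/-! Auxiliary lemmas for stmt11. -/

section listlemmas
variable {A : Type*} [Monoid A]

lemma aux_prod_ite {α : Type*} (l : List α) (p : α → Prop) [DecidablePred p] (g : α → A) :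
    (l.map fun i => if p i then g i else 1).prod = ((l.filter fun i => decide (p i)).map g).prod := by
  induction l with
  | nil => simp
  | cons a l ih =>
    by_cases h : p a <;> simp [h, ih, List.filter_cons]

lemma aux_filter_finRange (k : ℕ) (S : Finset (Fin k)) :
    (List.finRange k).filter (· ∈ S) = S.sort (· ≤ ·) := by
  refine (fun h1 h2 => List.Perm.eq_of_pairwise' h2 (S.pairwise_sort _) h1) ?_ ?_
  · refine List.perm_of_nodup_nodup_toFinset_eq
      (List.Nodup.filter _ (List.nodup_finRange k)) (S.sort_nodup _) ?_
    ext i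
    simp [List.mem_filter, Finset.mem_sort]
  · exact List.Pairwise.filter _ (List.pairwise_le_finRange k)

lemma aux_sort_eq_ofFn {k n : ℕ} (S : Finset (Fin k)) (h : S.card = n) :
    S.sort (· ≤ ·) = List.ofFn (fun j : Fin n => S.orderEmbOfFin h j) := by
  apply List.ext_getElem
  · simp [h]
  · intro i h1 h2
    simp only [List.getElem_ofFn]
    rw [Finset.orderEmbOfFin_apply]
    rfl

lemma aux_prod_indicator {k n : ℕ} (S : Finset (Fin k)) (h : S.card = n) (g : Fin k → A) :
    (List.ofFn fun i : Fin k => if i ∈ S then g i else 1).prod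
      = (List.ofFn fun j : Fin n => g (S.orderEmbOfFin h j)).prod := by
  rw [List.ofFn_eq_map, aux_prod_ite, aux_filter_finRange, aux_sort_eq_ofFn S h,
    List.map_ofFn]
  rfl
end listlemmas

section algebra
variable {A : Type*} [Ring A]

lemma aux_add_pow (X Y : A) (n : ℕ) :
    (X + Y)^n = ∑ w : Fin n → Bool, (List.ofFn fun j => if w j then X else Y).prod := by
  induction n with
  | zero => simp
  | succ n ih =>
    rw [pow_succ', ih, Finset.mul_sum]
    rw [← (Fin.consEquiv (fun _ : Fin (n+1) => Bool)).sum_comp]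
    rw [Fintype.sum_prod_type]
    simp only [Fin.consEquiv_apply, List.ofFn_succ, Fin.cons_zero, Fin.cons_succ, List.prod_cons]
    rw [Fintype.sum_bool]
    simp [add_mul, Finset.sum_add_distrib]
end algebra

/-! ### Parity patterns and fiber counting -/

def pat {k : ℕ} (n : ℕ) (S : Finset (Fin k)) : Fin n → Bool :=
  if h : S.card = n then fun j => decide ((S.orderEmbOfFin h j : ℕ) % 2 = 0)
  else fun _ => true

lemma pat_eq {k n : ℕ} (S : Finset (Fin k)) (h : S.card = n) :
    pat n S = fun j => decide ((S.orderEmbOfFin h j : ℕ) % 2 = 0) := by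
  rw [pat, dif_pos h]

lemma aux_eq_image {α : Type*} [LinearOrder α] {n : ℕ} (S : Finset α) (h : S.card = n) :
    S = Finset.image (S.orderEmbOfFin h) Finset.univ := by
  apply Finset.eq_of_subset_of_card_le
  · intro x hx
    have : x ∈ Set.range (S.orderEmbOfFin h) := by
      rw [Finset.range_orderEmbOfFin]; exact hx
    obtain ⟨j, hj⟩ := this
    exact Finset.mem_image.2 ⟨j, Finset.mem_univ j, hj⟩
  · exact (Finset.card_image_le).trans (by simp [h])

section fiber
variable {m n : ℕ} (w : Fin n → Bool)

def efun (w : Fin n → Bool) {T : Finset (Fin m)} (h : T.card = n) : Fin n → Fin (2*m) :=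
  fun j => ⟨2 * (T.orderEmbOfFin h j : ℕ) + (if w j then 0 else 1), by
    have h2 := (T.orderEmbOfFin h j).2
    have h3 : (if w j then (0:ℕ) else 1) ≤ 1 := by split <;> omega
    omega⟩

def emap (m : ℕ) (w : Fin n → Bool) (T : Finset (Fin m)) : Finset (Fin (2*m)) :=
  if h : T.card = n then Finset.image (efun w h) Finset.univ else ∅

lemma efun_strictMono {T : Finset (Fin m)} (h : T.card = n) : StrictMono (efun w h) := by
  intro j j' hjj
  have h2 : (T.orderEmbOfFin h j : ℕ) < (T.orderEmbOfFin h j' : ℕ) :=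
    (T.orderEmbOfFin h).strictMono hjj
  simp only [efun, Fin.mk_lt_mk]
  have e1 : (if w j then (0:ℕ) else 1) ≤ 1 := by split <;> omega
  have e2 : (0:ℕ) ≤ (if w j' then (0:ℕ) else 1) := by omega
  omega

lemma efun_mem {T : Finset (Fin m)} (h : T.card = n) (j : Fin n) :
    efun w h j ∈ emap m w T := by
  rw [emap, dif_pos h]
  exact Finset.mem_image.2 ⟨j, Finset.mem_univ j, rfl⟩

lemma emap_card {T : Finset (Fin m)} (h : T.card = n) : (emap m w T).card = n := by
  rw [emap, dif_pos h, Finset.card_image_of_injective _ (efun_strictMono w h).injective]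
  simp

lemma efun_eq_orderEmb {T : Finset (Fin m)} (h : T.card = n) :
    efun w h = (emap m w T).orderEmbOfFin (emap_card w h) :=
  Finset.orderEmbOfFin_unique _ (efun_mem w h) (efun_strictMono w h)

lemma emap_pat {T : Finset (Fin m)} (h : T.card = n) : pat n (emap m w T) = w := by
  rw [pat_eq _ (emap_card w h), ← efun_eq_orderEmb w h]
  funext j
  rcases Bool.eq_false_or_eq_true (w j) with hb | hb <;> simp [efun, hb] <;> omega

lemma emap_injOn : ∀ T ∈ Finset.powersetCard n (Finset.univ : Finset (Fin m)),
    ∀ T' ∈ Finset.powersetCard n (Finset.univ : Finset (Fin m)),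
    emap m w T = emap m w T' → T = T' := by
  intro T hT T' hT' heq
  rw [Finset.mem_powersetCard] at hT hT'
  have h : T.card = n := hT.2
  have h' : T'.card = n := hT'.2
  have hu2 : efun w h' = (emap m w T).orderEmbOfFin (emap_card w h) :=
    Finset.orderEmbOfFin_unique _ (fun j => heq ▸ efun_mem w h' j) (efun_strictMono w h')
  have hfe : ∀ j : Fin n, (T.orderEmbOfFin h j : ℕ) = (T'.orderEmbOfFin h' j : ℕ) := by
    intro j
    have e := congrFun ((efun_eq_orderEmb w h).trans hu2.symm) j
    have e2 := congrArg Fin.val e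
    simp only [efun] at e2
    omega
  rw [aux_eq_image T h, aux_eq_image T' h']
  have hfun : ⇑(T.orderEmbOfFin h) = ⇑(T'.orderEmbOfFin h') := funext fun j => Fin.ext (hfe j)
  rw [hfun]

lemma aux_fiber_lower (m n : ℕ) (w : Fin n → Bool) :
    Nat.choose m n ≤ (((Finset.powersetCard n (Finset.univ : Finset (Fin (2*m)))).filter
      (fun S => pat n S = w)).card) := by
  classical
  have hmem : ∀ T ∈ Finset.powersetCard n (Finset.univ : Finset (Fin m)),
      emap m w T ∈ (Finset.powersetCard n (Finset.univ : Finset (Fin (2*m)))).filter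
        (fun S => pat n S = w) := by
    intro T hT
    rw [Finset.mem_powersetCard] at hT
    rw [Finset.mem_filter, Finset.mem_powersetCard]
    exact ⟨⟨Finset.subset_univ _, emap_card w hT.2⟩, emap_pat w hT.2⟩
  have hle := Finset.card_le_card_of_injOn (emap m w) hmem (emap_injOn w)
  calc Nat.choose m n
      = (Finset.powersetCard n (Finset.univ : Finset (Fin m))).card := by
        simp [Finset.card_powersetCard]
    _ ≤ _ := hle
end fiber

/-! ### Multinomial counting -/

lemma aux_AT_eq_piAntidiag (k n : ℕ) :
    Finset.Nat.antidiagonalTuple k n = Finset.piAntidiag (Finset.univ : Finset (Fin k)) n := by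
  ext α
  rw [Finset.Nat.mem_antidiagonalTuple, Finset.mem_piAntidiag]
  simp

lemma aux_sum_multinomial (k n : ℕ) :
    ∑ α ∈ Finset.Nat.antidiagonalTuple k n, Nat.multinomial Finset.univ α = k ^ n := by
  classical
  have := Finset.sum_pow_eq_sum_piAntidiag_of_commute (R := ℕ)
    (Finset.univ : Finset (Fin k)) (fun _ => 1)
    (fun _ _ _ _ _ => Commute.all _ _) n
  simp only [Finset.sum_const, Finset.card_univ, Fintype.card_fin, smul_eq_mul, mul_one,
    one_pow] at this
  rw [aux_AT_eq_piAntidiag]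
  rw [this]
  refine Finset.sum_congr rfl fun α _ => ?_
  rw [Finset.noncommProd_eq_prod]
  simp

lemma aux_multinomial_spec {k n : ℕ} {α : Fin k → ℕ}
    (h : α ∈ Finset.Nat.antidiagonalTuple k n) :
    (∏ i, Nat.factorial (α i)) * Nat.multinomial Finset.univ α = Nat.factorial n := by
  have := Nat.multinomial_spec (Finset.univ : Finset (Fin k)) α
  rwa [Finset.Nat.mem_antidiagonalTuple.1 h] at this

/-! ### Choose asymptotics -/

lemma aux_choose_cast {K n : ℕ} (h : n ≤ K) :
    (K.choose n : ℝ) * (Nat.factorial n : ℝ) = ∏ j ∈ Finset.range n, ((K : ℝ) - j) := by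
  have h1 : K.descFactorial n = ∏ j ∈ Finset.range n, (K - j) :=
    Nat.descFactorial_eq_prod_range K n
  have h2 : (K.descFactorial n : ℝ) = (Nat.factorial n : ℝ) * (K.choose n : ℝ) := by
    rw [Nat.descFactorial_eq_factorial_mul_choose]; push_cast; ring
  rw [mul_comm, ← h2, h1]
  push_cast
  refine Finset.prod_congr rfl fun j hj => ?_
  rw [Nat.cast_sub (le_trans (Nat.le_of_lt_succ (Nat.lt_succ_of_lt (Finset.mem_range.1 hj))) h)]

lemma aux_choose_tendsto (a n : ℕ) (ha : 0 < a) :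
    Filter.Tendsto (fun m : ℕ => ((a*m).choose n : ℝ) / (m:ℝ)^n) atTop
      (nhds ((a:ℝ)^n / (Nat.factorial n : ℝ))) := by
  have hfact : (Nat.factorial n : ℝ) ≠ 0 := Nat.cast_ne_zero.2 (Nat.factorial_ne_zero n)
  have hev : (fun m : ℕ => ((a*m).choose n : ℝ) / (m:ℝ)^n)
      =ᶠ[atTop] fun m => (∏ j ∈ Finset.range n, ((a:ℝ) - (j:ℝ)/(m:ℝ))) / (Nat.factorial n : ℝ) := by
    filter_upwards [Filter.eventually_ge_atTop (max n 1)] with m hm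
    have hm1 : 1 ≤ m := le_trans (le_max_right n 1) hm
    have hmn : n ≤ a * m := le_trans (le_trans (le_max_left n 1) hm) (Nat.le_mul_of_pos_left m ha)
    have hc := aux_choose_cast hmn
    have hmne : (m:ℝ) ≠ 0 := Nat.cast_ne_zero.2 (by omega)
    have h3 : ∏ j ∈ Finset.range n, ((a:ℝ) - (j:ℝ)/(m:ℝ))
        = ∏ j ∈ Finset.range n, ((((a*m:ℕ):ℝ) - j)/(m:ℝ)) := by
      refine Finset.prod_congr rfl fun j _ => ?_
      push_cast
      field_simp
    rw [h3, Finset.prod_div_distrib, Finset.prod_const, Finset.card_range, ← hc]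
    field_simp
  refine Filter.Tendsto.congr' hev.symm ?_
  have hprod : Filter.Tendsto (fun m : ℕ => ∏ j ∈ Finset.range n, ((a:ℝ) - (j:ℝ)/(m:ℝ)))
      atTop (nhds (∏ _j ∈ Finset.range n, (a:ℝ))) := by
    refine tendsto_finset_prod _ fun j _ => ?_
    have h1 := tendsto_const_div_atTop_nhds_zero_nat (j:ℝ)
    have h2 := (tendsto_const_nhds (x := (a:ℝ)) (f := atTop)).sub h1
    simpa using h2
  have := hprod.div_const (Nat.factorial n : ℝ)
  simpa [Finset.prod_const, Finset.card_range] using this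

/-! ### The good-sum bijection -/

section main
variable {A : Type*} [NormedRing A] [NormOneClass A] [NormedAlgebra ℂ A]

def WP (X Y : A) {n : ℕ} (w : Fin n → Bool) : A := (List.ofFn fun j => if w j then X else Y).prod

variable (X Y : A)

lemma aux_card_filter_eq {k n : ℕ} {α : Fin k → ℕ} (hsum : ∑ i, α i = n)
    (hle : ∀ i, α i ≤ 1) : (Finset.univ.filter fun i => α i = 1).card = n := by
  rw [Finset.card_filter, ← hsum]
  refine Finset.sum_congr rfl fun i _ => ?_
  rcases Nat.le_one_iff_eq_zero_or_eq_one.1 (hle i) with h | h <;> simp [h]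

lemma aux_good_term {k n : ℕ} {α : Fin k → ℕ} (hle : ∀ i, α i ≤ 1)
    (h : (Finset.univ.filter fun i => α i = 1).card = n) :
    (List.ofFn fun i : Fin k => (if (i : ℕ) % 2 = 0 then X else Y) ^ α i).prod
      = WP X Y (pat n (Finset.univ.filter fun i => α i = 1)) := by
  set S := Finset.univ.filter fun i => α i = 1 with hS
  have h1 : (fun i : Fin k => (if (i : ℕ) % 2 = 0 then X else Y) ^ α i)
      = fun i => if i ∈ S then (if (i : ℕ) % 2 = 0 then X else Y) else 1 := by
    funext i
    rcases Nat.le_one_iff_eq_zero_or_eq_one.1 (hle i) with h0 | h0 <;>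
      simp [hS, h0, Finset.mem_filter]
  rw [h1, aux_prod_indicator S h, WP, pat_eq S h]
  refine congrArg List.prod (congrArg List.ofFn (funext fun j => ?_))
  by_cases hp : ((S.orderEmbOfFin h j : Fin k) : ℕ) % 2 = 0 <;> simp [hp]

lemma aux_good_sum (m k n : ℕ) :
    ∑ α ∈ (Finset.Nat.antidiagonalTuple k n).filter (fun α => ∀ i, α i ≤ 1),
      (((m : ℂ)^n * ∏ i, (Nat.factorial (α i) : ℂ))⁻¹) •
        (List.ofFn fun i : Fin k => (if (i : ℕ) % 2 = 0 then X else Y) ^ α i).prod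
    = ∑ S ∈ Finset.powersetCard n (Finset.univ : Finset (Fin k)),
        (((m:ℂ)^n)⁻¹) • WP X Y (pat n S) := by
  classical
  refine Finset.sum_nbij' (i := fun α => Finset.univ.filter fun i => α i = 1)
    (j := fun S => fun i => if i ∈ S then 1 else 0) ?_ ?_ ?_ ?_ ?_
  · intro α hα
    rw [Finset.mem_filter, Finset.Nat.mem_antidiagonalTuple] at hα
    rw [Finset.mem_powersetCard]
    exact ⟨Finset.subset_univ _, aux_card_filter_eq hα.1 hα.2⟩
  · intro S hS
    rw [Finset.mem_powersetCard] at hS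
    rw [Finset.mem_filter, Finset.Nat.mem_antidiagonalTuple]
    constructor
    · simp [Finset.sum_ite_mem, hS.2]
    · intro i; dsimp only; split <;> simp
  · intro α hα
    rw [Finset.mem_filter] at hα
    funext i
    rcases Nat.le_one_iff_eq_zero_or_eq_one.1 (hα.2 i) with h0 | h0 <;>
      simp [h0, Finset.mem_filter]
  · intro S hS
    ext i
    simp [Finset.mem_filter]
  · intro α hα
    rw [Finset.mem_filter, Finset.Nat.mem_antidiagonalTuple] at hα
    have hcard := aux_card_filter_eq hα.1 hα.2
    rw [aux_good_term X Y hα.2 hcard]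
    congr 2
    have : ∏ i, (Nat.factorial (α i) : ℂ) = 1 := by
      refine Finset.prod_eq_one fun i _ => ?_
      rcases Nat.le_one_iff_eq_zero_or_eq_one.1 (hα.2 i) with h0 | h0 <;> simp [h0]
    rw [this, mul_one]

lemma aux_good_card (k n : ℕ) :
    ((Finset.Nat.antidiagonalTuple k n).filter (fun α => ∀ i, α i ≤ 1)).card
      = Nat.choose k n := by
  classical
  have h2 : (Finset.powersetCard n (Finset.univ : Finset (Fin k))).card = Nat.choose k n := by
    simp [Finset.card_powersetCard]
  rw [← h2]
  refine Finset.card_nbij' (i := fun α => Finset.univ.filter fun i => α i = 1)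
    (j := fun S => fun i => if i ∈ S then 1 else 0) ?_ ?_ ?_ ?_
  · intro α hα
    rw [Finset.mem_coe, Finset.mem_filter, Finset.Nat.mem_antidiagonalTuple] at hα
    rw [Finset.mem_coe, Finset.mem_powersetCard]
    exact ⟨Finset.subset_univ _, aux_card_filter_eq hα.1 hα.2⟩
  · intro S hS
    rw [Finset.mem_coe, Finset.mem_powersetCard] at hS
    rw [Finset.mem_coe, Finset.mem_filter, Finset.Nat.mem_antidiagonalTuple]
    constructor
    · simp [Finset.sum_ite_mem, hS.2]
    · intro i; dsimp only; split <;> simp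
  · intro α hα
    rw [Finset.mem_coe, Finset.mem_filter] at hα
    funext i
    rcases Nat.le_one_iff_eq_zero_or_eq_one.1 (hα.2 i) with h0 | h0 <;>
      simp [h0, Finset.mem_filter]
  · intro S hS
    ext i
    simp [Finset.mem_filter]

/-! ### Norm bounds -/

lemma aux_norm_WP {n : ℕ} (w : Fin n → Bool) :
    ‖WP X Y w‖ ≤ (max 1 (max ‖X‖ ‖Y‖))^n := by
  set C := max 1 (max ‖X‖ ‖Y‖) with hC
  calc ‖WP X Y w‖ ≤ ((List.ofFn fun j => if w j then X else Y).map norm).prod :=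
        List.norm_prod_le _
    _ = ∏ j : Fin n, ‖if w j then X else Y‖ := by
        rw [List.map_ofFn, List.prod_ofFn]; rfl
    _ ≤ ∏ _j : Fin n, C := by
        refine Finset.prod_le_prod (fun j _ => norm_nonneg _) fun j _ => ?_
        split
        · exact le_trans (le_max_left _ _) (le_max_right _ _)
        · exact le_trans (le_max_right _ _) (le_max_right _ _)
    _ = C^n := by simp [Finset.prod_const]

lemma aux_norm_P {k n : ℕ} {α : Fin k → ℕ} (h : ∑ i, α i = n) :
    ‖(List.ofFn fun i : Fin k => (if (i : ℕ) % 2 = 0 then X else Y) ^ α i).prod‖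
      ≤ (max 1 (max ‖X‖ ‖Y‖))^n := by
  set C := max 1 (max ‖X‖ ‖Y‖) with hC
  have hC1 : (1:ℝ) ≤ C := le_max_left _ _
  have hC0 : (0:ℝ) ≤ C := le_trans zero_le_one hC1
  have hZ : ∀ i : Fin k, ‖if (i : ℕ) % 2 = 0 then X else Y‖ ≤ C := by
    intro i
    split
    · exact le_trans (le_max_left _ _) (le_max_right _ _)
    · exact le_trans (le_max_right _ _) (le_max_right _ _)
  calc ‖(List.ofFn fun i : Fin k => (if (i : ℕ) % 2 = 0 then X else Y) ^ α i).prod‖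
      ≤ ((List.ofFn fun i : Fin k => (if (i : ℕ) % 2 = 0 then X else Y) ^ α i).map norm).prod :=
        List.norm_prod_le _
    _ = ∏ i : Fin k, ‖(if (i : ℕ) % 2 = 0 then X else Y) ^ α i‖ := by
        rw [List.map_ofFn, List.prod_ofFn]; rfl
    _ ≤ ∏ i : Fin k, C ^ (α i) := by
        refine Finset.prod_le_prod (fun i _ => norm_nonneg _) fun i _ => ?_
        rcases Nat.eq_zero_or_pos (α i) with h0 | h0
        · simp [h0]
        · exact le_trans (norm_pow_le' _ h0) (pow_le_pow_left₀ (norm_nonneg _) (hZ i) _)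
    _ = C ^ n := by rw [Finset.prod_pow_eq_pow_sum, h]

lemma aux_coef_norm {k m n : ℕ} {α : Fin k → ℕ} :
    ‖(((m : ℂ)^n * ∏ i, (Nat.factorial (α i) : ℂ))⁻¹)‖
      = (((m:ℝ)^n * ∏ i, (Nat.factorial (α i) : ℝ))⁻¹) := by
  have h1 : ((m : ℂ)^n * ∏ i, (Nat.factorial (α i) : ℂ))
      = ((((m:ℝ)^n * ∏ i, (Nat.factorial (α i) : ℝ)) : ℝ) : ℂ) := by push_cast; ring
  rw [h1, norm_inv, Complex.norm_real, Real.norm_eq_abs, abs_of_nonneg]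
  positivity
end main

/-! ### Numeric sums -/

lemma aux_total_sum (k n : ℕ) :
    ∑ α ∈ Finset.Nat.antidiagonalTuple k n, (∏ i, (Nat.factorial (α i) : ℝ))⁻¹
      = (k:ℝ)^n / (Nat.factorial n : ℝ) := by
  have h1 : ∀ α ∈ Finset.Nat.antidiagonalTuple k n,
      (∏ i, (Nat.factorial (α i) : ℝ))⁻¹
        = (Nat.multinomial Finset.univ α : ℝ) / (Nat.factorial n : ℝ) := by
    intro α hα
    have h2 := aux_multinomial_spec hα
    have h3 : ((∏ i, Nat.factorial (α i) : ℕ) : ℝ) * (Nat.multinomial Finset.univ α : ℝ)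
        = (Nat.factorial n : ℝ) := by exact_mod_cast congrArg (Nat.cast (R := ℝ)) h2
    have h4 : ((∏ i, Nat.factorial (α i) : ℕ) : ℝ) ≠ 0 :=
      Nat.cast_ne_zero.2 (Finset.prod_ne_zero_iff.2 fun i _ => Nat.factorial_ne_zero _)
    have h5 : (∏ i, (Nat.factorial (α i) : ℝ)) = ((∏ i, Nat.factorial (α i) : ℕ) : ℝ) := by
      push_cast; rfl
    rw [h5]
    field_simp at h3 ⊢
    linarith [h3]
  rw [Finset.sum_congr rfl h1, ← Finset.sum_div]
  congr 1
  rw [← Nat.cast_sum]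
  rw [aux_sum_multinomial k n]
  push_cast; rfl

lemma aux_bad_sum (k n : ℕ) :
    ∑ α ∈ (Finset.Nat.antidiagonalTuple k n).filter (fun α => ¬ ∀ i, α i ≤ 1),
      (∏ i, (Nat.factorial (α i) : ℝ))⁻¹
    = (k:ℝ)^n / (Nat.factorial n : ℝ) - (Nat.choose k n : ℝ) := by
  classical
  have hsplit := Finset.sum_filter_add_sum_filter_not (Finset.Nat.antidiagonalTuple k n)
    (fun α => ∀ i, α i ≤ 1) (fun α => (∏ i, (Nat.factorial (α i) : ℝ))⁻¹)
  have hgood : ∑ α ∈ (Finset.Nat.antidiagonalTuple k n).filter (fun α => ∀ i, α i ≤ 1),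
      (∏ i, (Nat.factorial (α i) : ℝ))⁻¹ = (Nat.choose k n : ℝ) := by
    rw [← aux_good_card k n]
    rw [Finset.card_eq_sum_ones, Nat.cast_sum]
    refine Finset.sum_congr rfl fun α hα => ?_
    rw [Finset.mem_filter] at hα
    have : ∏ i, (Nat.factorial (α i) : ℝ) = 1 := by
      refine Finset.prod_eq_one fun i _ => ?_
      rcases Nat.le_one_iff_eq_zero_or_eq_one.1 (hα.2 i) with h0 | h0 <;> simp [h0]
    simp [this]
  rw [← aux_total_sum k n, ← hsplit, hgood]
  ring

/-! ### The master limit theorem -/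

theorem master {A : Type*} [NormedRing A] [NormOneClass A] [NormedAlgebra ℂ A]
    (X Y : A) (n : ℕ) :
    Filter.Tendsto (fun m : ℕ =>
        ∑ α ∈ Finset.Nat.antidiagonalTuple (2*m) n,
          (((m : ℂ)^n * ∏ i, (Nat.factorial (α i) : ℂ))⁻¹) •
            (List.ofFn (fun i : Fin (2*m) =>
              (if (i : ℕ) % 2 = 0 then X else Y) ^ (α i))).prod)
      atTop (nhds ((Nat.factorial n : ℂ)⁻¹ • (X + Y)^n)) := by
  classical
  set C := max 1 (max ‖X‖ ‖Y‖) with hC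
  have hC1 : (1:ℝ) ≤ C := le_max_left _ _
  have hC0 : (0:ℝ) ≤ C := le_trans zero_le_one hC1
  have hfact : (0:ℝ) < (Nat.factorial n : ℝ) := by
    exact_mod_cast Nat.factorial_pos n
  set N : ℕ → (Fin n → Bool) → ℕ := fun m w =>
    (((Finset.powersetCard n (Finset.univ : Finset (Fin (2*m)))).filter
      (fun S => pat n S = w)).card) with hN
  -- total count over fibers
  have htotal : ∀ m : ℕ, Nat.choose (2*m) n = ∑ w : Fin n → Bool, N m w := by
    intro m
    have h1 : (Finset.powersetCard n (Finset.univ : Finset (Fin (2*m)))).card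
        = ∑ w : Fin n → Bool, N m w :=
      Finset.card_eq_sum_card_fiberwise (fun S _ => Finset.mem_univ (pat n S))
    rw [← h1]
    simp [Finset.card_powersetCard]
  -- upper bound on each fiber (in ℕ)
  have hupper : ∀ (m : ℕ) (w : Fin n → Bool),
      N m w + (2^n - 1) * Nat.choose m n ≤ Nat.choose (2*m) n := by
    intro m w
    have hcard : (Finset.univ.erase w).card = 2^n - 1 := by
      rw [Finset.card_erase_of_mem (Finset.mem_univ w), Finset.card_univ]
      simp [Fintype.card_fun]
    have h2 : (Finset.univ.erase w).card * Nat.choose m n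
        ≤ ∑ w' ∈ Finset.univ.erase w, N m w' := by
      have := Finset.card_nsmul_le_sum (Finset.univ.erase w) (N m) (Nat.choose m n)
        (fun w' _ => aux_fiber_lower m n w')
      simpa [smul_eq_mul] using this
    have h3 : N m w + ∑ w' ∈ Finset.univ.erase w, N m w' = ∑ w' : Fin n → Bool, N m w' :=
      Finset.add_sum_erase _ _ (Finset.mem_univ w)
    rw [htotal m, ← h3]
    have := h2
    rw [hcard] at this
    omega
  -- fiber ratio tendsto
  have hNtend : ∀ w : Fin n → Bool,
      Filter.Tendsto (fun m : ℕ => (N m w : ℝ) / (m:ℝ)^n) atTop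
        (nhds ((Nat.factorial n : ℝ)⁻¹)) := by
    intro w
    have tlow : Filter.Tendsto (fun m : ℕ => (Nat.choose m n : ℝ)/(m:ℝ)^n) atTop
        (nhds ((Nat.factorial n : ℝ)⁻¹)) := by
      have := aux_choose_tendsto 1 n Nat.one_pos
      simpa [one_div] using this
    have tup : Filter.Tendsto (fun m : ℕ =>
        ((Nat.choose (2*m) n : ℝ) - ((2:ℝ)^n - 1) * (Nat.choose m n : ℝ))/(m:ℝ)^n) atTop
        (nhds ((Nat.factorial n : ℝ)⁻¹)) := by
      have h1 := aux_choose_tendsto 2 n Nat.zero_lt_two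
      have h2 := tlow
      have h3 := h1.sub (h2.const_mul ((2:ℝ)^n - 1))
      have heq : (fun m : ℕ =>
          ((Nat.choose (2*m) n : ℝ) - ((2:ℝ)^n - 1) * (Nat.choose m n : ℝ))/(m:ℝ)^n)
          = fun m : ℕ => ((2*m).choose n : ℝ)/(m:ℝ)^n
              - ((2:ℝ)^n - 1) * ((Nat.choose m n : ℝ)/(m:ℝ)^n) := by
        funext m
        field_simp
      rw [heq]
      convert h3 using 2
      push_cast
      field_simp
      ring
    refine tendsto_of_tendsto_of_tendsto_of_le_of_le' tlow tup ?_ ?_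
    · filter_upwards [Filter.eventually_ge_atTop 1] with m hm
      have hmp : (0:ℝ) < (m:ℝ)^n := by positivity
      gcongr
      try exact_mod_cast aux_fiber_lower m n w
    · filter_upwards [Filter.eventually_ge_atTop 1] with m hm
      have hmp : (0:ℝ) < (m:ℝ)^n := by positivity
      have hnum : (N m w : ℝ) ≤ (Nat.choose (2*m) n : ℝ) - ((2:ℝ)^n - 1) * (Nat.choose m n : ℝ) := by
        have h1 := hupper m w
        have h2 : ((N m w + (2^n - 1) * Nat.choose m n : ℕ) : ℝ) ≤ ((Nat.choose (2*m) n : ℕ) : ℝ) :=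
          Nat.cast_le.2 h1
        have h3 : ((2^n - 1 : ℕ) : ℝ) = (2:ℝ)^n - 1 := by
          rw [Nat.cast_sub Nat.one_le_two_pow]
          push_cast
          ring
        push_cast at h2
        rw [h3] at h2
        linarith
      gcongr
  have habs : ∀ w : Fin n → Bool,
      Filter.Tendsto (fun m : ℕ => |(N m w : ℝ)/(m:ℝ)^n - (Nat.factorial n : ℝ)⁻¹|) atTop
        (nhds 0) := by
    intro w
    have h1 := ((hNtend w).sub
      (tendsto_const_nhds (x := (Nat.factorial n : ℝ)⁻¹) (f := atTop))).abs
    simpa using h1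
  set L : A := (Nat.factorial n : ℂ)⁻¹ • (X + Y)^n with hL
  have hLw : L = ∑ w : Fin n → Bool, (Nat.factorial n : ℂ)⁻¹ • WP X Y w := by
    rw [hL, aux_add_pow, Finset.smul_sum]
    rfl
  set g : ℕ → ℝ := fun m =>
    C^n * ((2:ℝ)^n/(Nat.factorial n : ℝ) - ((2*m).choose n : ℝ)/(m:ℝ)^n)
      + ∑ w : Fin n → Bool, |(N m w : ℝ)/(m:ℝ)^n - (Nat.factorial n : ℝ)⁻¹| * C^n with hg
  have hgt : Filter.Tendsto g atTop (nhds 0) := by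
    have t0 := aux_choose_tendsto 2 n Nat.zero_lt_two
    have t0' : Filter.Tendsto (fun m : ℕ => ((2*m).choose n : ℝ)/(m:ℝ)^n) atTop
        (nhds ((2:ℝ)^n/(Nat.factorial n : ℝ))) := by
      convert t0 using 2
      try norm_num
    have t1 := ((tendsto_const_nhds
      (x := (2:ℝ)^n/(Nat.factorial n : ℝ)) (f := atTop)).sub t0').const_mul (C^n)
    have t2 := tendsto_finset_sum (Finset.univ : Finset (Fin n → Bool))
      (fun w _ => (habs w).mul_const (C^n))
    have t3 := t1.add t2
    simpa using t3
  have hbound : ∀ᶠ m in atTop, ‖(∑ α ∈ Finset.Nat.antidiagonalTuple (2*m) n,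
      (((m : ℂ)^n * ∏ i, (Nat.factorial (α i) : ℂ))⁻¹) •
        (List.ofFn (fun i : Fin (2*m) =>
          (if (i : ℕ) % 2 = 0 then X else Y) ^ (α i))).prod) - L‖ ≤ g m := by
    filter_upwards [Filter.eventually_ge_atTop 1] with m hm
    have hmR : (1:ℝ) ≤ (m:ℝ) := by exact_mod_cast hm
    have hmp : (0:ℝ) < (m:ℝ)^n := by positivity
    have hsplit := (Finset.sum_filter_add_sum_filter_not
      (Finset.Nat.antidiagonalTuple (2*m) n) (fun α => ∀ i, α i ≤ 1)
      (fun α => (((m : ℂ)^n * ∏ i, (Nat.factorial (α i) : ℂ))⁻¹) •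
        (List.ofFn (fun i : Fin (2*m) =>
          (if (i : ℕ) % 2 = 0 then X else Y) ^ (α i))).prod)).symm
    rw [hsplit]
    have hgood := aux_good_sum X Y m (2*m) n
    have hfib := Finset.sum_fiberwise' (Finset.powersetCard n (Finset.univ : Finset (Fin (2*m))))
      (pat n) (fun w => ((m:ℂ)^n)⁻¹ • WP X Y w)
    have hgood2 : ∑ α ∈ (Finset.Nat.antidiagonalTuple (2*m) n).filter (fun α => ∀ i, α i ≤ 1),
        (((m : ℂ)^n * ∏ i, (Nat.factorial (α i) : ℂ))⁻¹) •
          (List.ofFn (fun i : Fin (2*m) =>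
            (if (i : ℕ) % 2 = 0 then X else Y) ^ (α i))).prod
        = ∑ w : Fin n → Bool, (N m w) • (((m:ℂ)^n)⁻¹ • WP X Y w) := by
      rw [hgood, ← hfib]
      refine Finset.sum_congr rfl fun w _ => ?_
      rw [Finset.sum_const]
    rw [hgood2, hLw]
    have hcomb : (∑ w : Fin n → Bool, (N m w) • (((m:ℂ)^n)⁻¹ • WP X Y w))
          - (∑ w : Fin n → Bool, (Nat.factorial n : ℂ)⁻¹ • WP X Y w)
        = ∑ w : Fin n → Bool,
            (((N m w : ℂ)) * ((m:ℂ)^n)⁻¹ - ((Nat.factorial n : ℂ))⁻¹) • WP X Y w := by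
      rw [← Finset.sum_sub_distrib]
      refine Finset.sum_congr rfl fun w _ => ?_
      rw [← Nat.cast_smul_eq_nsmul ℂ, smul_smul, ← sub_smul]
    have hre : (∑ w : Fin n → Bool, (N m w) • (((m:ℂ)^n)⁻¹ • WP X Y w))
          + (∑ α ∈ (Finset.Nat.antidiagonalTuple (2*m) n).filter (fun α => ¬ ∀ i, α i ≤ 1),
            (((m : ℂ)^n * ∏ i, (Nat.factorial (α i) : ℂ))⁻¹) •
              (List.ofFn (fun i : Fin (2*m) =>
                (if (i : ℕ) % 2 = 0 then X else Y) ^ (α i))).prod)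
          - (∑ w : Fin n → Bool, (Nat.factorial n : ℂ)⁻¹ • WP X Y w)
        = (∑ α ∈ (Finset.Nat.antidiagonalTuple (2*m) n).filter (fun α => ¬ ∀ i, α i ≤ 1),
            (((m : ℂ)^n * ∏ i, (Nat.factorial (α i) : ℂ))⁻¹) •
              (List.ofFn (fun i : Fin (2*m) =>
                (if (i : ℕ) % 2 = 0 then X else Y) ^ (α i))).prod)
          + ∑ w : Fin n → Bool,
              (((N m w : ℂ)) * ((m:ℂ)^n)⁻¹ - ((Nat.factorial n : ℂ))⁻¹) • WP X Y w := by
      rw [← hcomb]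
      abel
    rw [hre]
    have hB : ‖∑ α ∈ (Finset.Nat.antidiagonalTuple (2*m) n).filter (fun α => ¬ ∀ i, α i ≤ 1),
        (((m : ℂ)^n * ∏ i, (Nat.factorial (α i) : ℂ))⁻¹) •
          (List.ofFn (fun i : Fin (2*m) =>
            (if (i : ℕ) % 2 = 0 then X else Y) ^ (α i))).prod‖
        ≤ C^n * ((2:ℝ)^n/(Nat.factorial n : ℝ) - ((2*m).choose n : ℝ)/(m:ℝ)^n) := by
      calc ‖_‖ ≤ ∑ α ∈ (Finset.Nat.antidiagonalTuple (2*m) n).filter (fun α => ¬ ∀ i, α i ≤ 1),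
            ‖(((m : ℂ)^n * ∏ i, (Nat.factorial (α i) : ℂ))⁻¹) •
              (List.ofFn (fun i : Fin (2*m) =>
                (if (i : ℕ) % 2 = 0 then X else Y) ^ (α i))).prod‖ := norm_sum_le _ _
        _ ≤ ∑ α ∈ (Finset.Nat.antidiagonalTuple (2*m) n).filter (fun α => ¬ ∀ i, α i ≤ 1),
            (((m:ℝ)^n * ∏ i, (Nat.factorial (α i) : ℝ))⁻¹) * C^n := by
            refine Finset.sum_le_sum fun α hα => ?_
            rw [Finset.mem_filter] at hα
            have hsum := Finset.Nat.mem_antidiagonalTuple.1 hα.1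
            rw [norm_smul, aux_coef_norm]
            refine mul_le_mul_of_nonneg_left (aux_norm_P X Y hsum) (by positivity)
        _ = C^n * ((2:ℝ)^n/(Nat.factorial n : ℝ) - ((2*m).choose n : ℝ)/(m:ℝ)^n) := by
            have h6 : ∀ α : Fin (2*m) → ℕ,
                (((m:ℝ)^n * ∏ i, (Nat.factorial (α i) : ℝ))⁻¹) * C^n
                = C^n * ((m:ℝ)^n)⁻¹ * (∏ i, (Nat.factorial (α i) : ℝ))⁻¹ := by
              intro α; rw [mul_inv]; ring
            rw [Finset.sum_congr rfl fun α _ => h6 α, ← Finset.mul_sum, aux_bad_sum (2*m) n]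
            have h7 : (((2*m : ℕ)):ℝ)^n = (2:ℝ)^n * (m:ℝ)^n := by push_cast; ring
            rw [h7]
            have hmne : (m:ℝ)^n ≠ 0 := ne_of_gt hmp
            field_simp
            try ring
            try tauto
    have hW : ‖∑ w : Fin n → Bool,
        (((N m w : ℂ)) * ((m:ℂ)^n)⁻¹ - ((Nat.factorial n : ℂ))⁻¹) • WP X Y w‖
        ≤ ∑ w : Fin n → Bool, |(N m w : ℝ)/(m:ℝ)^n - (Nat.factorial n : ℝ)⁻¹| * C^n := by
      calc ‖_‖ ≤ ∑ w : Fin n → Bool,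
            ‖(((N m w : ℂ)) * ((m:ℂ)^n)⁻¹ - ((Nat.factorial n : ℂ))⁻¹) • WP X Y w‖ :=
            norm_sum_le _ _
        _ ≤ _ := by
            refine Finset.sum_le_sum fun w _ => ?_
            rw [norm_smul]
            have hco : ((N m w : ℂ)) * ((m:ℂ)^n)⁻¹ - ((Nat.factorial n : ℂ))⁻¹
                = (((N m w : ℝ)/(m:ℝ)^n - (Nat.factorial n : ℝ)⁻¹ : ℝ) : ℂ) := by
              push_cast
              ring
            rw [hco, Complex.norm_real, Real.norm_eq_abs]
            exact mul_le_mul_of_nonneg_left (aux_norm_WP X Y w) (abs_nonneg _)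
    calc ‖_ + _‖ ≤ ‖_‖ + ‖_‖ := norm_add_le _ _
      _ ≤ _ := add_le_add hB hW
  rw [tendsto_iff_norm_sub_tendsto_zero]
  exact squeeze_zero' (Filter.Eventually.of_forall fun m => norm_nonneg _) hbound hgt

theorem stmt11 (d : ℕ) (X Y : Matrix (Fin d) (Fin d) ℂ) (n : ℕ) :
    Tendsto (fun m : ℕ =>
        ∑ α ∈ Finset.Nat.antidiagonalTuple (2*m) n,
          (((m : ℂ)^n * ∏ i, (Nat.factorial (α i) : ℂ))⁻¹) •
            (List.ofFn (fun i : Fin (2*m) =>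
              (if (i : ℕ) % 2 = 0 then X else Y) ^ (α i))).prod)
      atTop (nhds ((Nat.factorial n : ℂ)⁻¹ • (X + Y)^n)) := by
  rcases Nat.eq_zero_or_pos d with rfl | hd
  · have : ∀ m : ℕ, (∑ α ∈ Finset.Nat.antidiagonalTuple (2*m) n,
          (((m : ℂ)^n * ∏ i, (Nat.factorial (α i) : ℂ))⁻¹) •
            (List.ofFn (fun i : Fin (2*m) =>
              (if (i : ℕ) % 2 = 0 then X else Y) ^ (α i))).prod)
        = (Nat.factorial n : ℂ)⁻¹ • (X + Y)^n := by
      intro m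
      apply Subsingleton.elim (α := Matrix (Fin 0) (Fin 0) ℂ)
    rw [tendsto_congr this]
    exact tendsto_const_nhds
  · letI : NormedRing (Matrix (Fin d) (Fin d) ℂ) := Matrix.linftyOpNormedRing
    haveI : Nonempty (Fin d) := ⟨⟨0, hd⟩⟩
    letI : NormOneClass (Matrix (Fin d) (Fin d) ℂ) := Matrix.linfty_opNormOneClass
    letI : NormedAlgebra ℂ (Matrix (Fin d) (Fin d) ℂ) := Matrix.linftyOpNormedAlgebra
    exact master X Y n
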